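/- Let p₁ ≠ p₂ be distinct primes and let B ⊆ ℤ_{p₁} be a ball. For n ∈ ℕ, let φ^B(n) = #{a ∈ ℕ : 1 ≤ a ≤ n, gcd(a,n) = 1, and a/n ∈ B as an element of ℚ_{p₁}}. Then there exist N₀ ∈ ℕ and a constant C > 0 such that for all N ≥ N₀, Σ_{1 ≤ n ≤ N, p₂ ∤ n} φ^B(n) ≥ C·N². -/

import Mathlib

set_option maxHeartbeats 1000000
open Finset

private def Fa (q r n : ℕ) : Finset ℕ :=
  (Icc 1 n).filter (fun a => a % q = (r * n) % q)

private def Fc (q r n : ℕ) : Finset ℕ :=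
  (Icc 1 n).filter (fun a => a % q = (r * n) % q ∧ Nat.Coprime a n)

private def Alw (p₁ p₂ M : ℕ) : Finset ℕ :=
  (Icc 1 M).filter (fun n => ¬ p₁ ∣ n ∧ ¬ p₂ ∣ n)

private def AA (q r p₁ p₂ M : ℕ) : ℕ := ∑ n ∈ Alw p₁ p₂ M, (Fa q r n).card
private def GG (q r p₁ p₂ M : ℕ) : ℕ := ∑ n ∈ Alw p₁ p₂ M, (Fc q r n).card

private lemma Fa_upper (q r n : ℕ) (hq : 1 ≤ q) : (Fa q r n).card ≤ n / q + 1 := by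
  have h : (Fa q r n).card ≤ (Icc 0 (n / q)).card := by
    apply Finset.card_le_card_of_injOn (fun a => a / q)
    · intro a ha
      simp only [Fa, mem_coe, mem_filter, mem_Icc] at ha
      simp only [mem_coe, mem_Icc]
      exact ⟨Nat.zero_le _, Nat.div_le_div_right ha.1.2⟩
    · intro a ha b hb hab
      simp only [Fa, coe_filter, Set.mem_setOf_eq, mem_Icc] at ha hb
      have hab' : a / q = b / q := hab
      have h1 := Nat.div_add_mod a q
      have h2 := Nat.div_add_mod b q
      rw [← hab'] at h2
      have : a % q = b % q := by omega
      omega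
  simpa using h

private lemma Fa_lower (q r n : ℕ) (hq : 1 ≤ q) : n / q - 1 ≤ (Fa q r n).card := by
  have h : (Icc 1 (n / q - 1)).card ≤ (Fa q r n).card := by
    apply Finset.card_le_card_of_injOn (fun j => (r * n) % q + j * q)
    · intro j hj
      simp only [mem_coe, mem_Icc] at hj
      have hv : (r * n) % q < q := Nat.mod_lt _ hq
      have hK : 2 ≤ n / q := by omega
      have h2 : 1 * 1 ≤ j * q := Nat.mul_le_mul hj.1 hq
      have h3 : j * q ≤ (n / q - 1) * q := Nat.mul_le_mul_right _ hj.2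
      have h4 : n / q * q ≤ n := Nat.div_mul_le_self n q
      have h5 : (n / q - 1) * q = n / q * q - q := by
        rw [Nat.sub_mul, one_mul]
      have h7 : 2 * q ≤ n / q * q := Nat.mul_le_mul_right _ hK
      simp only [Fa, mem_coe, mem_filter, mem_Icc]
      refine ⟨⟨by omega, by omega⟩, ?_⟩
      simp [Nat.add_mul_mod_self_right, Nat.mod_mod_of_dvd _ (dvd_refl q)]
    · intro j₁ _ j₂ _ h
      simp only at h
      have : j₁ * q = j₂ * q := by omega
      exact Nat.eq_of_mul_eq_mul_right (by omega) this
  simpa using h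

private lemma gauss_Icc (K : ℕ) : ∑ m ∈ Icc 1 K, (m : ℝ) = K * (K + 1) / 2 := by
  induction K with
  | zero => simp
  | succ K ih =>
    rw [Finset.sum_Icc_succ_top (by omega), ih]
    push_cast
    ring

private lemma T_sum (d M : ℕ) (hd : 0 < d) :
    ∑ n ∈ (Icc 1 M).filter (fun n => d ∣ n), (n : ℝ)
      = (d : ℝ) * ((M / d : ℕ) : ℝ) * (((M / d : ℕ) : ℝ) + 1) / 2 := by
  have himg : (Icc 1 M).filter (fun n => d ∣ n) = (Icc 1 (M / d)).image (fun m => d * m) := by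
    ext n
    simp only [mem_filter, mem_Icc, mem_image]
    constructor
    · rintro ⟨⟨h1, h2⟩, m, rfl⟩
      have hm1 : 1 ≤ m := by
        rcases Nat.eq_zero_or_pos m with h | h
        · subst h; simp at h1
        · exact h
      have hcomm : d * m = m * d := Nat.mul_comm d m
      exact ⟨m, ⟨hm1, (Nat.le_div_iff_mul_le hd).mpr (by omega)⟩, rfl⟩
    · rintro ⟨m, ⟨h1, h2⟩, rfl⟩
      have h3 := (Nat.le_div_iff_mul_le hd).mp h2
      have hcomm : d * m = m * d := Nat.mul_comm d m
      exact ⟨⟨by nlinarith, by omega⟩, ⟨m, rfl⟩⟩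
  rw [himg, Finset.sum_image (fun x _ y _ h => by
    exact Nat.eq_of_mul_eq_mul_left hd h)]
  push_cast
  rw [← Finset.mul_sum, gauss_Icc]
  ring


private lemma T_le (d M : ℕ) (hd : 0 < d) :
    ∑ n ∈ (Icc 1 M).filter (fun n => d ∣ n), (n : ℝ)
      ≤ (M : ℝ) ^ 2 / (2 * d) + (M : ℝ) / 2 := by
  rw [T_sum d M hd]
  set K : ℕ := M / d with hKdef
  have hd' : (0:ℝ) < d := by exact_mod_cast hd
  have hK0 : (0:ℝ) ≤ K := Nat.cast_nonneg _
  have hM0 : (0:ℝ) ≤ M := Nat.cast_nonneg _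
  have hdK : (d:ℝ) * K ≤ M := by
    have h := Nat.div_mul_le_self M d
    have h' : (K:ℝ) * d ≤ M := by exact_mod_cast h
    linarith
  have heq : (M:ℝ)^2 / (2*d) + M/2 = ((M:ℝ)^2 + M*d) / (2*d) := by
    field_simp
  rw [heq, le_div_iff₀ (by positivity)]
  nlinarith [mul_le_mul hdK hdK (by positivity) hM0,
    mul_le_mul_of_nonneg_left hdK hd'.le]

private lemma T_ge (d M : ℕ) (hd : 0 < d) :
    (M : ℝ) ^ 2 / (2 * d) - (M : ℝ)
      ≤ ∑ n ∈ (Icc 1 M).filter (fun n => d ∣ n), (n : ℝ) := by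
  rw [T_sum d M hd]
  set K : ℕ := M / d with hKdef
  have hd' : (0:ℝ) < d := by exact_mod_cast hd
  have hK0 : (0:ℝ) ≤ K := Nat.cast_nonneg _
  have hM0 : (0:ℝ) ≤ M := Nat.cast_nonneg _
  have hlt : (M:ℝ) < d * K + d := by
    have h := Nat.div_add_mod M d
    have h2 : M % d < d := Nat.mod_lt _ hd
    have h' : (M:ℝ) = (d:ℝ) * K + ((M % d : ℕ) : ℝ) := by exact_mod_cast h.symm
    have h2' : ((M % d : ℕ) : ℝ) < d := by exact_mod_cast h2
    linarith
  rcases Nat.eq_zero_or_pos K with hK | hK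
  · have hMd : (M:ℝ) < d := by
      rw [hK] at hlt
      push_cast at hlt
      linarith
    have h1 : (M:ℝ)^2 / (2*d) ≤ M := by
      rw [div_le_iff₀ (by positivity)]
      nlinarith
    rw [hK]
    push_cast
    linarith
  · have hK1 : (1:ℝ) ≤ K := by exact_mod_cast hK
    have hdK : (d:ℝ) * K ≤ M := by
      have h := Nat.div_mul_le_self M d
      have h' : (K:ℝ) * d ≤ M := by exact_mod_cast h
      linarith
    rw [sub_le_iff_le_add, div_le_iff₀ (by positivity)]
    nlinarith [mul_self_le_mul_self hM0 hlt.le,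
      mul_le_mul_of_nonneg_left hK1 hd'.le,
      mul_le_mul_of_nonneg_left hdK hd'.le]

private lemma S_eq (p₁ p₂ M : ℕ) (hco : Nat.Coprime p₁ p₂) :
    ∑ n ∈ Alw p₁ p₂ M, (n : ℝ)
      = (∑ n ∈ (Icc 1 M).filter (fun n => (1:ℕ) ∣ n), (n : ℝ))
        - (∑ n ∈ (Icc 1 M).filter (fun n => p₁ ∣ n), (n : ℝ))
        - (∑ n ∈ (Icc 1 M).filter (fun n => p₂ ∣ n), (n : ℝ))
        + (∑ n ∈ (Icc 1 M).filter (fun n => p₁ * p₂ ∣ n), (n : ℝ)) := by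
  classical
  rw [Alw]
  simp only [Finset.sum_filter]
  rw [← Finset.sum_sub_distrib, ← Finset.sum_sub_distrib, ← Finset.sum_add_distrib]
  refine Finset.sum_congr rfl fun n _ => ?_
  have hmul : p₁ * p₂ ∣ n ↔ (p₁ ∣ n ∧ p₂ ∣ n) := by
    constructor
    · intro h
      exact ⟨(dvd_mul_right p₁ p₂).trans h, (dvd_mul_left p₂ p₁).trans h⟩
    · rintro ⟨h1, h2⟩
      exact hco.mul_dvd_of_dvd_of_dvd h1 h2
  by_cases h1 : p₁ ∣ n <;> by_cases h2 : p₂ ∣ n <;>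
    simp [h1, h2, hmul, one_dvd]

private lemma sum_inv_sq_le (N : ℕ) : ∑ g ∈ Icc 2 N, (1 : ℝ) / (g : ℝ) ^ 2 ≤ 3 / 4 := by
  have key : ∀ m : ℕ, ∑ g ∈ Icc 2 (m + 2), (1 : ℝ) / (g : ℝ) ^ 2 ≤ 3 / 4 - 1 / (m + 2) := by
    intro m
    induction m with
    | zero => norm_num
    | succ m ih =>
      have h : (2:ℕ) ≤ m + 2 + 1 := by omega
      rw [show m + 1 + 2 = (m + 2) + 1 from rfl, Finset.sum_Icc_succ_top (by omega)]
      have hm : (0:ℝ) < (m:ℝ) + 2 := by positivity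
      have hm3 : (0:ℝ) < (m:ℝ) + 3 := by positivity
      have hstep : (1:ℝ) / ((m + 2 + 1 : ℕ) : ℝ) ^ 2 ≤ 1 / ((m:ℝ)+2) - 1 / ((m:ℝ)+3) := by
        push_cast
        rw [div_sub_div _ _ (ne_of_gt hm) (ne_of_gt hm3), div_le_div_iff₀ (by positivity) (by positivity)]
        ring_nf
        nlinarith
      have : ((m + 2 + 1 : ℕ) : ℝ) = (m:ℝ) + 3 := by push_cast; ring
      calc ∑ g ∈ Icc 2 (m + 2), (1:ℝ)/(g:ℝ)^2 + 1 / ((m+2+1 : ℕ):ℝ)^2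
          ≤ (3/4 - 1/((m:ℝ)+2)) + (1/((m:ℝ)+2) - 1/((m:ℝ)+3)) := by
            exact add_le_add ih hstep
        _ ≤ 3/4 - 1/((m+1:ℕ)+2 : ℝ) := by push_cast; ring_nf; linarith
  rcases le_or_gt N 1 with h | h
  · rw [Finset.Icc_eq_empty (by omega)]
    norm_num
  · obtain ⟨m, rfl⟩ : ∃ m, N = m + 2 := ⟨N - 2, by omega⟩
    have := key m
    have : (0:ℝ) < (m:ℝ) + 2 := by positivity
    linarith [key m, one_div_pos.mpr this]


private lemma sum_inv_le (N : ℕ) : ∑ g ∈ Icc 1 N, (1 : ℝ) / (g : ℝ) ≤ 2 * Real.sqrt N := by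
  induction N with
  | zero => simp
  | succ N ih =>
    rw [Finset.sum_Icc_succ_top (by omega)]
    set s := Real.sqrt ((N:ℝ) + 1) with hsdef
    set t := Real.sqrt (N:ℝ) with htdef
    have hN0 : (0:ℝ) ≤ N := Nat.cast_nonneg _
    have hs0 : 0 ≤ s := Real.sqrt_nonneg _
    have ht0 : 0 ≤ t := Real.sqrt_nonneg _
    have hs' : s ^ 2 = (N:ℝ) + 1 := Real.sq_sqrt (by positivity)
    have ht' : t ^ 2 = (N:ℝ) := Real.sq_sqrt hN0
    have hs1 : 1 ≤ s := by nlinarith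
    have hts : t ≤ s := by nlinarith
    have hkey : (s - t) * (s + t) = 1 := by nlinarith
    have h2 : s + t ≤ 2 * s ^ 2 := by nlinarith
    have hst : 0 ≤ s - t := by linarith
    have h3 : 1 ≤ (s - t) * (2 * s ^ 2) :=
      hkey ▸ mul_le_mul_of_nonneg_left h2 hst
    have hfin : 1 / ((N:ℝ) + 1) ≤ 2 * s - 2 * t := by
      rw [div_le_iff₀ (by positivity)]
      nlinarith
    have hsqrt_cast : Real.sqrt ((N + 1 : ℕ) : ℝ) = s := by
      rw [hsdef]; norm_cast
    rw [hsqrt_cast]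
    have hgcast : ((N + 1 : ℕ) : ℝ) = (N:ℝ) + 1 := by push_cast; ring
    rw [hgcast]
    linarith [ih]

private lemma strat (q r p₁ p₂ N : ℕ)
    (hq : ∀ n, ¬ p₁ ∣ n → Nat.gcd q n = 1) :
    AA q r p₁ p₂ N ≤ ∑ g ∈ Icc 1 N, GG q r p₁ p₂ (N / g) := by
  classical
  have hA : AA q r p₁ p₂ N = ((Alw p₁ p₂ N).sigma (fun n => Fa q r n)).card := by
    rw [Finset.card_sigma]; rfl
  have hG : ∑ g ∈ Icc 1 N, GG q r p₁ p₂ (N / g)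
      = ((Icc 1 N).sigma (fun g => (Alw p₁ p₂ (N / g)).sigma (fun n => Fc q r n))).card := by
    rw [Finset.card_sigma]
    refine Finset.sum_congr rfl fun g _ => ?_
    rw [Finset.card_sigma]; rfl
  rw [hA, hG]
  apply Finset.card_le_card_of_injOn
    (fun x => ⟨Nat.gcd x.2 x.1, ⟨x.1 / Nat.gcd x.2 x.1, x.2 / Nat.gcd x.2 x.1⟩⟩)
  · rintro ⟨n, a⟩ hx
    simp only [Finset.mem_coe, Finset.mem_sigma, Alw, Fa, mem_filter, mem_Icc] at hx
    obtain ⟨⟨⟨hn1, hnN⟩, hp1, hp2⟩, ⟨ha1, han⟩, hmod⟩ := hx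
    set g := Nat.gcd a n with hg
    have hg0 : 0 < g := Nat.gcd_pos_of_pos_left _ (by omega)
    have hga : g ∣ a := Nat.gcd_dvd_left a n
    have hgn : g ∣ n := Nat.gcd_dvd_right a n
    have hgle : g ≤ n := Nat.le_of_dvd (by omega) hgn
    simp only [Finset.mem_coe, Finset.mem_sigma, Alw, Fc, mem_filter, mem_Icc]
    refine ⟨⟨hg0, le_trans hgle hnN⟩, ⟨⟨?_, Nat.div_le_div_right hnN⟩, ?_, ?_⟩,
      ⟨⟨?_, Nat.div_le_div_right han⟩, ?_, Nat.coprime_div_gcd_div_gcd hg0⟩⟩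
    · exact Nat.one_le_div_iff hg0 |>.mpr hgle
    · exact fun h => hp1 (h.trans (Nat.div_dvd_of_dvd hgn))
    · exact fun h => hp2 (h.trans (Nat.div_dvd_of_dvd hgn))
    · exact Nat.one_le_div_iff hg0 |>.mpr (Nat.le_of_dvd (by omega) hga)
    · -- modEq after division by g
      have hco : Nat.gcd q g = 1 :=
        Nat.Coprime.coprime_dvd_right hgn (hq n hp1)
      have hkey : g * (a / g) ≡ g * (r * (n / g)) [MOD q] := by
        have h1 : g * (a / g) = a := Nat.mul_div_cancel' hga
        have h2 : g * (r * (n / g)) = r * n := by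
          rw [mul_left_comm, Nat.mul_div_cancel' hgn]
        rw [h1, h2]
        exact hmod
      exact Nat.ModEq.cancel_left_of_coprime hco hkey
  · rintro ⟨n₁, a₁⟩ hx ⟨n₂, a₂⟩ hy hfeq
    simp only [Finset.coe_sigma, Set.mem_sigma_iff, Finset.mem_coe, Finset.mem_sigma,
      Alw, Fa, mem_filter, mem_Icc] at hx hy
    simp only [Sigma.mk.inj_iff, heq_eq_eq] at hfeq
    obtain ⟨hgeq, hneq, haeq⟩ := hfeq
    have h1 : n₁ = Nat.gcd a₁ n₁ * (n₁ / Nat.gcd a₁ n₁) :=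
      (Nat.mul_div_cancel' (Nat.gcd_dvd_right _ _)).symm
    have h2 : n₂ = Nat.gcd a₂ n₂ * (n₂ / Nat.gcd a₂ n₂) :=
      (Nat.mul_div_cancel' (Nat.gcd_dvd_right _ _)).symm
    have h3 : a₁ = Nat.gcd a₁ n₁ * (a₁ / Nat.gcd a₁ n₁) :=
      (Nat.mul_div_cancel' (Nat.gcd_dvd_left _ _)).symm
    have h4 : a₂ = Nat.gcd a₂ n₂ * (a₂ / Nat.gcd a₂ n₂) :=
      (Nat.mul_div_cancel' (Nat.gcd_dvd_left _ _)).symm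
    have hn : n₁ = n₂ := by
      have h := congrArg₂ (fun x y => x * y) hgeq hneq
      simpa only [Nat.mul_div_cancel' (Nat.gcd_dvd_right a₁ n₁),
        Nat.mul_div_cancel' (Nat.gcd_dvd_right a₂ n₂)] using h
    have ha : a₁ = a₂ := by
      have h := congrArg₂ (fun x y => x * y) hgeq haeq
      simpa only [Nat.mul_div_cancel' (Nat.gcd_dvd_left a₁ n₁),
        Nat.mul_div_cancel' (Nat.gcd_dvd_left a₂ n₂)] using h
    subst hn; subst ha; rfl

/-- `φ^B(n)`: the number of `a` with `1 ≤ a ≤ n`, `gcd(a,n) = 1`, such that `a/n`,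
viewed in `ℚ_[p₁]`, lies in the ball of radius `p₁^{-k}` centered at `c ∈ ℤ_[p₁]`. -/
noncomputable def phiB (p₁ : ℕ) [Fact p₁.Prime] (k : ℕ) (c : ℤ_[p₁]) (n : ℕ) : ℕ :=
  Set.ncard {a : ℕ | 1 ≤ a ∧ a ≤ n ∧ Nat.Coprime a n ∧
    ‖((a : ℚ_[p₁]) / (n : ℚ_[p₁])) - (c : ℚ_[p₁])‖ < (p₁ : ℝ) ^ (-(k : ℤ))}

private lemma ball_mem (p₁ : ℕ) [hp : Fact p₁.Prime] (k : ℕ) (c : ℤ_[p₁]) (n a : ℕ)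
    (hn : ¬ p₁ ∣ n) (hn1 : 1 ≤ n)
    (hmod : a % (p₁ ^ (k+1)) = ((c.appr (k+1)) * n) % (p₁ ^ (k+1))) :
    ‖((a : ℚ_[p₁]) / (n : ℚ_[p₁])) - (c : ℚ_[p₁])‖ < (p₁ : ℝ) ^ (-(k : ℤ)) := by
  set r := c.appr (k+1) with hrdef
  have hp1 : 1 < p₁ := hp.out.one_lt
  -- step 1 : ‖(a : ℤ_[p₁]) - r * n‖ ≤ p₁ ^ (-(k+1))
  have hmod' : a ≡ r * n [MOD p₁ ^ (k+1)] := hmod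
  have hdvd : ((p₁ : ℤ)) ^ (k+1) ∣ ((a : ℤ) - (r * n : ℕ)) := by
    have := (Nat.ModEq.symm hmod').dvd
    push_cast at this ⊢
    exact_mod_cast this
  have h1 : ‖((a : ℤ_[p₁]) - ((r * n : ℕ) : ℤ_[p₁]))‖ ≤ (p₁ : ℝ) ^ (-((k+1 : ℕ) : ℤ)) := by
    have : ((a : ℤ_[p₁]) - ((r * n : ℕ) : ℤ_[p₁])) = (((a : ℤ) - (r * n : ℕ) : ℤ) : ℤ_[p₁]) := by
      push_cast; ring
    rw [this]
    exact PadicInt.norm_int_le_pow_iff_dvd.mpr hdvd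
  -- step 2 : ‖c - r‖ ≤ p₁ ^ (-(k+1))
  have h2 : ‖c - (r : ℤ_[p₁])‖ ≤ (p₁ : ℝ) ^ (-((k+1 : ℕ) : ℤ)) := by
    rw [PadicInt.norm_le_pow_iff_mem_span_pow]
    exact c.appr_spec (k+1)
  -- step 3 : ‖(a : ℤ_[p₁]) - c * n‖ ≤ p₁ ^ (-(k+1))
  have h3 : ‖(a : ℤ_[p₁]) - c * n‖ ≤ (p₁ : ℝ) ^ (-((k+1 : ℕ) : ℤ)) := by
    have hsplit : (a : ℤ_[p₁]) - c * n
        = ((a : ℤ_[p₁]) - ((r * n : ℕ) : ℤ_[p₁])) + ((r : ℤ_[p₁]) - c) * n := by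
      push_cast
      ring
    rw [hsplit]
    refine le_trans (PadicInt.nonarchimedean _ _) (max_le h1 ?_)
    calc ‖((r : ℤ_[p₁]) - c) * (n : ℤ_[p₁])‖ = ‖(r : ℤ_[p₁]) - c‖ * ‖(n : ℤ_[p₁])‖ :=
          norm_mul _ _
      _ ≤ ‖(r : ℤ_[p₁]) - c‖ * 1 :=
          mul_le_mul_of_nonneg_left (PadicInt.norm_le_one _) (norm_nonneg _)
      _ ≤ (p₁ : ℝ) ^ (-((k+1 : ℕ) : ℤ)) := by
          rw [mul_one, norm_sub_rev]
          exact h2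
  -- step 4 : ‖(n : ℤ_[p₁])‖ = 1
  have hnnorm : ‖(n : ℤ_[p₁])‖ = 1 := by
    refine le_antisymm (PadicInt.norm_le_one _) ?_
    by_contra h
    push_neg at h
    have hcast : ((n : ℤ) : ℤ_[p₁]) = ((n : ℕ) : ℤ_[p₁]) := by push_cast; ring
    have := (PadicInt.norm_int_lt_one_iff_dvd (n : ℤ)).mp (by rw [hcast]; exact h)
    exact hn (by exact_mod_cast this)
  -- step 5 : pass to ℚ_[p₁]
  have hnz : ((n : ℚ_[p₁])) ≠ 0 := by
    exact_mod_cast Nat.cast_ne_zero.mpr (by omega)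
  have hrw : ((a : ℚ_[p₁]) / (n : ℚ_[p₁])) - (c : ℚ_[p₁])
      = (((a : ℤ_[p₁]) - c * n : ℤ_[p₁]) : ℚ_[p₁]) / (n : ℚ_[p₁]) := by
    push_cast
    field_simp
  have hnormeq : ‖((a : ℚ_[p₁]) / (n : ℚ_[p₁])) - (c : ℚ_[p₁])‖ = ‖(a : ℤ_[p₁]) - c * n‖ := by
    rw [hrw, norm_div, PadicInt.norm_def]
    have : ‖(n : ℚ_[p₁])‖ = 1 := by
      rw [show (n : ℚ_[p₁]) = (((n:ℕ) : ℤ_[p₁]) : ℚ_[p₁]) by push_cast; ring, ← PadicInt.norm_def,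
        hnnorm]
    rw [this, div_one]
  rw [hnormeq]
  refine lt_of_le_of_lt h3 ?_
  have hp1' : (1:ℝ) < p₁ := by exact_mod_cast hp1
  apply zpow_lt_zpow_right₀ hp1'
  omega

private lemma Fc_le_phiB (p₁ : ℕ) [hp : Fact p₁.Prime] (k : ℕ) (c : ℤ_[p₁]) (n : ℕ)
    (hn1 : 1 ≤ n) (hp1 : ¬ p₁ ∣ n) :
    (Fc (p₁ ^ (k+1)) (c.appr (k+1)) n).card ≤ phiB p₁ k c n := by
  rw [← Set.ncard_coe_finset]
  apply Set.ncard_le_ncard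
  · intro a ha
    simp only [Fc, coe_filter, Set.mem_setOf_eq, mem_Icc] at ha
    obtain ⟨⟨ha1, han⟩, hmod, hcop⟩ := ha
    exact ⟨ha1, han, hcop, ball_mem p₁ k c n a hp1 hn1 hmod⟩
  · exact (Set.finite_Icc 1 n).subset (fun a ha => ⟨ha.1, ha.2.1⟩)


private lemma S_ub (p₁ p₂ : ℕ) (hp₁ : p₁.Prime) (hp₂ : p₂.Prime)
    (hcop12 : Nat.Coprime p₁ p₂) (M : ℕ) :
    ∑ n ∈ Alw p₁ p₂ M, (n:ℝ)
      ≤ (1/2 - 1/(2*(p₁:ℝ)) - 1/(2*(p₂:ℝ)) + 1/(2*((p₁:ℝ)*(p₂:ℝ)))) * M^2 + 3 * M := by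
  have e := S_eq p₁ p₂ M hcop12
  have t1 := T_le 1 M (by norm_num)
  have t2 := T_ge p₁ M hp₁.pos
  have t3 := T_ge p₂ M hp₂.pos
  have t4 := T_le (p₁ * p₂) M (Nat.mul_pos hp₁.pos hp₂.pos)
  push_cast at t1 t2 t3 t4
  have e1 : Finset.filter (fun n => (1:ℕ) ∣ n) (Icc 1 M) = Icc 1 M :=
    Finset.filter_true_of_mem (fun _ _ => one_dvd _)
  rw [e, e1]
  norm_num at t1
  ring_nf
  ring_nf at t1 t2 t3 t4
  linarith

private lemma S_lb (p₁ p₂ : ℕ) (hp₁ : p₁.Prime) (hp₂ : p₂.Prime)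
    (hcop12 : Nat.Coprime p₁ p₂) (M : ℕ) :
    (1/2 - 1/(2*(p₁:ℝ)) - 1/(2*(p₂:ℝ)) + 1/(2*((p₁:ℝ)*(p₂:ℝ)))) * M^2 - 3 * M
      ≤ ∑ n ∈ Alw p₁ p₂ M, (n:ℝ) := by
  have e := S_eq p₁ p₂ M hcop12
  have t1 := T_ge 1 M (by norm_num)
  have t2 := T_le p₁ M hp₁.pos
  have t3 := T_le p₂ M hp₂.pos
  have t4 := T_ge (p₁ * p₂) M (Nat.mul_pos hp₁.pos hp₂.pos)
  push_cast at t1 t2 t3 t4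
  have e1 : Finset.filter (fun n => (1:ℕ) ∣ n) (Icc 1 M) = Icc 1 M :=
    Finset.filter_true_of_mem (fun _ _ => one_dvd _)
  rw [e, e1]
  norm_num at t1
  ring_nf
  ring_nf at t1 t2 t3 t4
  linarith

theorem statement17 (p₁ p₂ : ℕ) [Fact p₁.Prime] [Fact p₂.Prime] (hne : p₁ ≠ p₂)
    (k : ℕ) (c : ℤ_[p₁]) :
    ∃ N₀ : ℕ, ∃ C : ℝ, 0 < C ∧ ∀ N ≥ N₀,
      C * (N : ℝ) ^ 2 ≤
        ∑ n ∈ Finset.Icc 1 N, (if p₂ ∣ n then 0 else (phiB p₁ k c n : ℝ)) := by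
  classical
  have hp₁ : p₁.Prime := Fact.out
  have hp₂ : p₂.Prime := Fact.out
  set q : ℕ := p₁ ^ (k + 1) with hqdef
  set r : ℕ := c.appr (k + 1) with hrdef
  have hq1 : 1 ≤ q := Nat.one_le_pow _ _ hp₁.pos
  have hqgcd : ∀ n, ¬ p₁ ∣ n → Nat.gcd q n = 1 := by
    intro n h
    exact Nat.Coprime.pow_left _ ((Nat.Prime.coprime_iff_not_dvd hp₁).mpr h)
  have hcop12 : Nat.Coprime p₁ p₂ := (Nat.coprime_primes hp₁ hp₂).mpr hne
  have hp₁2 : (2:ℝ) ≤ p₁ := by exact_mod_cast hp₁.two_le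
  have hp₂2 : (2:ℝ) ≤ p₂ := by exact_mod_cast hp₂.two_le
  have hq0 : (0:ℝ) < q := by exact_mod_cast hq1
  have hqge1 : (1:ℝ) ≤ q := by exact_mod_cast hq1
  set β : ℝ := 1/2 - 1/(2*(p₁:ℝ)) - 1/(2*(p₂:ℝ)) + 1/(2*((p₁:ℝ)*(p₂:ℝ))) with hβdef
  have hβeq : β = (((p₁:ℝ)-1)*((p₂:ℝ)-1))/(2*(p₁:ℝ)*(p₂:ℝ)) := by
    rw [hβdef]; field_simp; ring
  have hβpos : 0 < β := by
    rw [hβeq]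
    apply div_pos (mul_pos (by linarith) (by linarith)) (by positivity)
  set b : ℝ := β / q with hbdef
  have hbpos : 0 < b := div_pos hβpos hq0
  have hAlw_card : ∀ M : ℕ, ((Alw p₁ p₂ M).card : ℝ) ≤ M := by
    intro M
    have h1 : (Alw p₁ p₂ M).card ≤ (Icc 1 M).card := Finset.card_le_card (filter_subset _ _)
    have h2 : (Icc 1 M).card = M := by rw [Nat.card_Icc]; omega
    exact_mod_cast h1.trans_eq h2
  have hS_ub : ∀ M : ℕ, ∑ n ∈ Alw p₁ p₂ M, (n:ℝ) ≤ β * M^2 + 3 * M := by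
    intro M
    rw [hβdef]
    exact S_ub p₁ p₂ hp₁ hp₂ hcop12 M
  have hS_lb : ∀ M : ℕ, β * M^2 - 3 * M ≤ ∑ n ∈ Alw p₁ p₂ M, (n:ℝ) := by
    intro M
    rw [hβdef]
    exact S_lb p₁ p₂ hp₁ hp₂ hcop12 M
  have hdivlt : ∀ n : ℕ, (n:ℝ)/(q:ℝ) ≤ ((n / q : ℕ):ℝ) + 1 := by
    intro n
    have h := Nat.div_add_mod n q
    have h2 : n % q < q := Nat.mod_lt _ (by omega)
    rw [div_le_iff₀ hq0]
    have h' : (n:ℝ) = (q:ℝ) * ((n/q : ℕ):ℝ) + ((n % q : ℕ):ℝ) := by exact_mod_cast h.symm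
    have h2' : ((n % q : ℕ):ℝ) < q := by exact_mod_cast h2
    nlinarith [Nat.cast_nonneg (α := ℝ) (n/q)]
  -- upper bound for GG
  have hGG_ub : ∀ M : ℕ, (GG q r p₁ p₂ M : ℝ) ≤ b * M^2 + 4 * M := by
    intro M
    have h1 : (GG q r p₁ p₂ M : ℝ) ≤ (AA q r p₁ p₂ M : ℝ) := by
      have h : GG q r p₁ p₂ M ≤ AA q r p₁ p₂ M := by
        unfold GG AA
        apply Finset.sum_le_sum
        intro n _
        apply Finset.card_le_card
        intro a ha
        simp only [Fc, Fa, mem_filter, mem_Icc] at ha ⊢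
        exact ⟨ha.1, ha.2.1⟩
      exact_mod_cast h
    have h2 : (AA q r p₁ p₂ M : ℝ) ≤ (∑ n ∈ Alw p₁ p₂ M, (n:ℝ))/q + ((Alw p₁ p₂ M).card : ℝ) := by
      unfold AA
      push_cast
      rw [Finset.sum_div]
      have hc : ((Alw p₁ p₂ M).card : ℝ) = ∑ _n ∈ Alw p₁ p₂ M, (1:ℝ) := by
        rw [Finset.sum_const, nsmul_eq_mul, mul_one]
      rw [hc, ← Finset.sum_add_distrib]
      apply Finset.sum_le_sum
      intro n _
      have hcard := Fa_upper q r n hq1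
      have hc' : ((Fa q r n).card : ℝ) ≤ ((n / q : ℕ):ℝ) + 1 := by exact_mod_cast hcard
      have hd := Nat.cast_div_le (α := ℝ) (m := n) (n := q)
      linarith
    have h3 : (∑ n ∈ Alw p₁ p₂ M, (n:ℝ))/q ≤ (β * M^2 + 3*M)/q := by
      gcongr
      exact hS_ub M
    have h4 : (β * M^2 + 3*M)/q = b * M^2 + (3*M)/q := by
      rw [hbdef]; ring
    have h5 : (3*(M:ℝ))/q ≤ 3*M := by
      apply div_le_self (by positivity) hqge1
    have h6 := hAlw_card M
    linarith
  -- upper bound for the tail sum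
  have htail : ∀ N : ℕ, ∑ g ∈ Icc 2 N, (GG q r p₁ p₂ (N / g) : ℝ)
      ≤ 3/4 * (b * N^2) + 8 * N * Real.sqrt N := by
    intro N
    have hstep : ∑ g ∈ Icc 2 N, (GG q r p₁ p₂ (N / g) : ℝ)
        ≤ ∑ g ∈ Icc 2 N, (b * N^2 * (1/(g:ℝ)^2) + 4 * N * (1/(g:ℝ))) := by
      apply Finset.sum_le_sum
      intro g hg
      simp only [mem_Icc] at hg
      have hg0 : (0:ℝ) < g := by
        have : 2 ≤ g := hg.1
        positivity
      have h1 := hGG_ub (N / g)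
      have h2 : ((N / g : ℕ):ℝ) ≤ (N:ℝ)/g := Nat.cast_div_le
      have h2' : (0:ℝ) ≤ ((N / g : ℕ):ℝ) := Nat.cast_nonneg _
      have h3 : ((N / g : ℕ):ℝ)^2 ≤ ((N:ℝ)/g)^2 := by
        apply pow_le_pow_left₀ h2' h2
      have h4 : ((N:ℝ)/g)^2 = (N:ℝ)^2 * (1/(g:ℝ)^2) := by ring
      have h5 : (N:ℝ)/g = (N:ℝ) * (1/(g:ℝ)) := by ring
      calc (GG q r p₁ p₂ (N / g) : ℝ) ≤ b * ((N / g : ℕ):ℝ)^2 + 4 * ((N / g : ℕ):ℝ) := h1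
        _ ≤ b * ((N:ℝ)/g)^2 + 4 * ((N:ℝ)/g) := by
            apply add_le_add
            · exact mul_le_mul_of_nonneg_left h3 hbpos.le
            · linarith
        _ = b * N^2 * (1/(g:ℝ)^2) + 4 * N * (1/(g:ℝ)) := by rw [h4, h5]; ring
    have hsplit : ∑ g ∈ Icc 2 N, (b * (N:ℝ)^2 * (1/(g:ℝ)^2) + 4 * N * (1/(g:ℝ)))
        = b * N^2 * (∑ g ∈ Icc 2 N, 1/(g:ℝ)^2) + 4 * N * (∑ g ∈ Icc 2 N, 1/(g:ℝ)) := by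
      rw [Finset.sum_add_distrib, Finset.mul_sum, Finset.mul_sum]
    have hinv2 := sum_inv_sq_le N
    have hinv1 : ∑ g ∈ Icc 2 N, 1/(g:ℝ) ≤ 2 * Real.sqrt N := by
      refine le_trans ?_ (sum_inv_le N)
      apply Finset.sum_le_sum_of_subset_of_nonneg
      · apply Finset.Icc_subset_Icc_left
        omega
      · intro i hi _
        simp only [mem_Icc] at hi
        positivity
    have hbN : (0:ℝ) ≤ b * N^2 := by positivity
    have hN0 : (0:ℝ) ≤ N := Nat.cast_nonneg _
    calc ∑ g ∈ Icc 2 N, (GG q r p₁ p₂ (N / g) : ℝ)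
        ≤ b * N^2 * (∑ g ∈ Icc 2 N, 1/(g:ℝ)^2) + 4 * N * (∑ g ∈ Icc 2 N, 1/(g:ℝ)) := by
          rw [← hsplit]; exact hstep
      _ ≤ b * N^2 * (3/4) + 4 * N * (2 * Real.sqrt N) := by
          apply add_le_add
          · exact mul_le_mul_of_nonneg_left hinv2 hbN
          · exact mul_le_mul_of_nonneg_left hinv1 (by positivity)
      _ = 3/4 * (b * N^2) + 8 * N * Real.sqrt N := by ring
  -- choose the constants
  refine ⟨max 1 (Nat.ceil ((104/b)^2) + 1), b/8, by positivity, ?_⟩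
  intro N hN
  have hN1 : 1 ≤ N := le_trans (le_max_left _ _) hN
  have hNceil : Nat.ceil ((104/b)^2) + 1 ≤ N := le_trans (le_max_right _ _) hN
  have hNbig : (104/b)^2 ≤ (N:ℝ) := by
    have h1 : Nat.ceil ((104/b)^2) ≤ N := by omega
    have := Nat.ceil_le.mp h1
    exact this
  have hNr0 : (0:ℝ) ≤ N := Nat.cast_nonneg _
  have hsqrtN : 104/b ≤ Real.sqrt N := by
    have h1 : Real.sqrt ((104/b)^2) ≤ Real.sqrt N := Real.sqrt_le_sqrt hNbig
    rwa [Real.sqrt_sq (by positivity)] at h1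
  have hsqrt1 : 1 ≤ Real.sqrt N := by
    rw [show (1:ℝ) = Real.sqrt 1 from Real.sqrt_one.symm]
    exact Real.sqrt_le_sqrt (by exact_mod_cast hN1)
  have hNsq : Real.sqrt N * Real.sqrt N = (N:ℝ) := Real.mul_self_sqrt hNr0
  -- lower bound for AA
  have hAA_lb : b * N^2 - 5 * N ≤ (AA q r p₁ p₂ N : ℝ) := by
    have h2 : (∑ n ∈ Alw p₁ p₂ N, (n:ℝ))/q - 2 * ((Alw p₁ p₂ N).card : ℝ)
        ≤ (AA q r p₁ p₂ N : ℝ) := by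
      unfold AA
      push_cast
      rw [Finset.sum_div]
      have hc : 2 * ((Alw p₁ p₂ N).card : ℝ) = ∑ _n ∈ Alw p₁ p₂ N, (2:ℝ) := by
        rw [Finset.sum_const, nsmul_eq_mul]; ring
      rw [hc, ← Finset.sum_sub_distrib]
      apply Finset.sum_le_sum
      intro n _
      have hcard := Fa_lower q r n hq1
      have hc' : ((n/q : ℕ):ℝ) ≤ ((Fa q r n).card : ℝ) + 1 := by
        have : n/q ≤ (Fa q r n).card + 1 := by omega
        exact_mod_cast this
      have hd := hdivlt n
      linarith
    have h3 : (β * N^2 - 3*N)/q ≤ (∑ n ∈ Alw p₁ p₂ N, (n:ℝ))/q := by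
      gcongr
      exact hS_lb N
    have h4 : (β * N^2 - 3*N)/q = b * N^2 - (3*N)/q := by
      rw [hbdef]; ring
    have h5 : (3*(N:ℝ))/q ≤ 3*N := div_le_self (by positivity) hqge1
    have h55 : (0:ℝ) ≤ (3*(N:ℝ))/q := by positivity
    have h6 := hAlw_card N
    linarith
  -- stratification, cast to ℝ
  have hstrat : (AA q r p₁ p₂ N : ℝ)
      ≤ (GG q r p₁ p₂ N : ℝ) + ∑ g ∈ Icc 2 N, (GG q r p₁ p₂ (N / g) : ℝ) := by
    have h1 := strat q r p₁ p₂ N hqgcd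
    have h2 : Icc 1 N = insert 1 (Icc 2 N) := by
      ext x
      simp only [mem_Icc, mem_insert]
      omega
    rw [h2, Finset.sum_insert (by simp)] at h1
    rw [Nat.div_one] at h1
    exact_mod_cast h1
  -- main lower bound for GG
  have hGG_lb : b/8 * N^2 ≤ (GG q r p₁ p₂ N : ℝ) := by
    have h1 : b * N^2 - 5 * N - (3/4 * (b * N^2) + 8 * N * Real.sqrt N)
        ≤ (GG q r p₁ p₂ N : ℝ) := by
      have := htail N
      linarith [hAA_lb, hstrat]
    have h2 : 5 * (N:ℝ) ≤ 5 * N * Real.sqrt N := by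
      nlinarith [mul_le_mul_of_nonneg_left hsqrt1 (by positivity : (0:ℝ) ≤ 5*(N:ℝ))]
    have h3 : 13 * (N:ℝ) * Real.sqrt N ≤ b/8 * N^2 := by
      have hb8 : 13 ≤ b/8 * Real.sqrt N := by
        have : b/8 * (104/b) ≤ b/8 * Real.sqrt N :=
          mul_le_mul_of_nonneg_left hsqrtN (by positivity)
        have heq : b/8 * (104/b) = 13 := by field_simp; ring
        linarith
      have : 13 * ((N:ℝ) * Real.sqrt N) ≤ (b/8 * Real.sqrt N) * ((N:ℝ) * Real.sqrt N) := by
        apply mul_le_mul_of_nonneg_right hb8 (by positivity)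
      calc 13 * (N:ℝ) * Real.sqrt N = 13 * ((N:ℝ) * Real.sqrt N) := by ring
        _ ≤ (b/8 * Real.sqrt N) * ((N:ℝ) * Real.sqrt N) := this
        _ = b/8 * ((Real.sqrt N * Real.sqrt N) * N) := by ring
        _ = b/8 * N^2 := by rw [hNsq]; ring
    linarith
  -- compare GG with the phiB sum
  have hfinal : (GG q r p₁ p₂ N : ℝ)
      ≤ ∑ n ∈ Finset.Icc 1 N, (if p₂ ∣ n then 0 else (phiB p₁ k c n : ℝ)) := by
    have h1 : (GG q r p₁ p₂ N : ℝ)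
        = ∑ n ∈ Alw p₁ p₂ N, ((Fc q r n).card : ℝ) := by
      unfold GG
      push_cast
      rfl
    rw [h1]
    have h2 : ∑ n ∈ Alw p₁ p₂ N, ((Fc q r n).card : ℝ)
        ≤ ∑ n ∈ Alw p₁ p₂ N, (if p₂ ∣ n then 0 else (phiB p₁ k c n : ℝ)) := by
      apply Finset.sum_le_sum
      intro n hn
      simp only [Alw, mem_filter, mem_Icc] at hn
      obtain ⟨⟨hn1, hnN⟩, hnp1, hnp2⟩ := hn
      rw [if_neg hnp2]
      have := Fc_le_phiB p₁ k c n hn1 hnp1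
      exact_mod_cast this
    refine le_trans h2 ?_
    apply Finset.sum_le_sum_of_subset_of_nonneg (filter_subset _ _)
    intro i _ _
    split
    · exact le_rfl
    · positivity
  calc b/8 * (N:ℝ)^2 ≤ (GG q r p₁ p₂ N : ℝ) := hGG_lb
    _ ≤ _ := hfinal
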